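/- The function g(u) = u·log((u+1)/(u-1)) - 2 defined for u > 1 is positive, strictly decreasing, and satisfies g(u) = O(u⁻²) as u → ∞; specifically g(u) ≤ 4/(3(u²-1)) for u > 1. -/

import Mathlib

open Real Filter

private lemma wp_hasDerivAt_L (u : ℝ) (hu : 1 < u) :
    HasDerivAt (fun v : ℝ => Real.log ((v + 1) / (v - 1))) (-2 / (u ^ 2 - 1)) u := by
  have ha : HasDerivAt (fun v : ℝ => v + 1) 1 u := (hasDerivAt_id u).add_const 1
  have hb : HasDerivAt (fun v : ℝ => v - 1) 1 u := (hasDerivAt_id u).sub_const 1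
  have hla := (Real.hasDerivAt_log (by linarith : u + 1 ≠ 0)).comp u ha
  have hlb := (Real.hasDerivAt_log (by linarith : u - 1 ≠ 0)).comp u hb
  have h1 : HasDerivAt (fun v : ℝ => Real.log (v + 1) - Real.log (v - 1))
      ((u + 1)⁻¹ * 1 - (u - 1)⁻¹ * 1) u := hla.sub hlb
  have heq : (fun v : ℝ => Real.log ((v + 1) / (v - 1))) =ᶠ[nhds u]
      (fun v : ℝ => Real.log (v + 1) - Real.log (v - 1)) := by
    filter_upwards [eventually_gt_nhds hu] with v hv
    exact Real.log_div (by linarith) (by linarith)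
  have hval : (u + 1)⁻¹ * 1 - (u - 1)⁻¹ * 1 = -2 / (u ^ 2 - 1) := by
    have h1' : u + 1 ≠ 0 := by linarith
    have h2' : u - 1 ≠ 0 := by linarith
    have h3' : u ^ 2 - 1 ≠ 0 := by nlinarith
    field_simp
    ring
  exact hval ▸ h1.congr_of_eventuallyEq heq

private lemma wp_pos_of_strictAntiOn_tendsto {f : ℝ → ℝ}
    (hf : StrictAntiOn f (Set.Ioi 1)) (hl : Tendsto f atTop (nhds 0)) :
    ∀ u : ℝ, 1 < u → 0 < f u := by
  intro u hu
  have h1 : f (u + 1) < f u :=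
    hf (Set.mem_Ioi.2 hu) (Set.mem_Ioi.2 (by linarith)) (by linarith)
  have h2 : (0 : ℝ) ≤ f (u + 1) := by
    refine le_of_tendsto hl ?_
    filter_upwards [eventually_ge_atTop (u + 1)] with v hv
    rcases eq_or_lt_of_le hv with h | h
    · exact h ▸ le_rfl
    · exact (hf (Set.mem_Ioi.2 (by linarith)) (Set.mem_Ioi.2 (by linarith)) h).le
  linarith

private lemma wp_L_tendsto :
    Tendsto (fun v : ℝ => Real.log ((v + 1) / (v - 1))) atTop (nhds 0) := by
  have h1 : Tendsto (fun v : ℝ => (v + 1) / (v - 1)) atTop (nhds 1) := by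
    have hd : Tendsto (fun v : ℝ => v - 1) atTop atTop :=
      tendsto_atTop_add_const_right _ (-1) tendsto_id
    have h2 : Tendsto (fun v : ℝ => 1 + 2 / (v - 1)) atTop (nhds (1 + 0)) :=
      tendsto_const_nhds.add (tendsto_const_nhds.div_atTop hd)
    rw [add_zero] at h2
    refine h2.congr' ?_
    filter_upwards [eventually_gt_atTop (1 : ℝ)] with v hv
    have : v - 1 ≠ 0 := by linarith
    field_simp
    ring
  have := (Real.continuousAt_log (by norm_num : (1 : ℝ) ≠ 0)).tendsto.comp h1
  simpa [Function.comp_def] using this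

/-- The kernel g(u) = u·log((u+1)/(u-1)) - 2 on (1, ∞) is positive, strictly
decreasing, is O(u⁻²) at infinity, and satisfies g(u) ≤ 4/(3(u²-1)). -/
theorem wp_kernel_properties :
    (∀ u : ℝ, 1 < u → 0 < u * Real.log ((u + 1) / (u - 1)) - 2) ∧
    StrictAntiOn (fun u : ℝ => u * Real.log ((u + 1) / (u - 1)) - 2) (Set.Ioi 1) ∧
    ((fun u : ℝ => u * Real.log ((u + 1) / (u - 1)) - 2) =O[Filter.atTop]
      fun u : ℝ => u⁻¹ ^ 2) ∧
    (∀ u : ℝ, 1 < u → u * Real.log ((u + 1) / (u - 1)) - 2 ≤ 4 / (3 * (u ^ 2 - 1))) := by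
  set L : ℝ → ℝ := fun v => Real.log ((v + 1) / (v - 1)) with hL
  -- basic facts
  have hne : ∀ u : ℝ, 1 < u → u ≠ 0 ∧ u ^ 2 - 1 ≠ 0 ∧ (0:ℝ) < u ^ 2 - 1 := by
    intro u hu
    refine ⟨by linarith, ?_, ?_⟩ <;> nlinarith
  -- f1 : L u - 2/u is positive
  have hf1deriv : ∀ u : ℝ, 1 < u →
      HasDerivAt (fun v : ℝ => L v - 2 / v) (-2 / (u ^ 2 - 1) - (-2 / u ^ 2)) u := by
    intro u hu
    have hinv : HasDerivAt (fun v : ℝ => 2 / v) (-2 / u ^ 2) u := by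
      have := (hasDerivAt_inv (by linarith : u ≠ 0)).const_mul (2:ℝ)
      simpa [div_eq_mul_inv, neg_div] using this
    exact (wp_hasDerivAt_L u hu).sub hinv
  have hf1anti : StrictAntiOn (fun v : ℝ => L v - 2 / v) (Set.Ioi 1) := by
    apply strictAntiOn_of_deriv_neg (convex_Ioi 1)
    · intro u hu
      exact (hf1deriv u hu).continuousAt.continuousWithinAt
    · intro u hu
      rw [interior_Ioi] at hu
      have hu' : 1 < u := hu
      rw [(hf1deriv u hu').deriv]
      obtain ⟨h0, h1, h2⟩ := hne u hu'
      have : 2 / u ^ 2 < 2 / (u ^ 2 - 1) := by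
        apply div_lt_div_of_pos_left (by norm_num) h2 (by nlinarith)
      have e1 : -2 / (u^2-1) - (-2/u^2) = 2/u^2 - 2/(u^2-1) := by ring
      rw [e1]; linarith
  have hf1tend : Tendsto (fun v : ℝ => L v - 2 / v) atTop (nhds 0) := by
    have h2 : Tendsto (fun v : ℝ => 2 / v) atTop (nhds 0) :=
      tendsto_const_nhds.div_atTop tendsto_id
    simpa using wp_L_tendsto.sub h2
  have hf1pos : ∀ u : ℝ, 1 < u → 0 < L u - 2 / u :=
    wp_pos_of_strictAntiOn_tendsto hf1anti hf1tend
  -- f2 : 2u/(u²-1) - L u is positive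
  have hf2deriv : ∀ u : ℝ, 1 < u →
      HasDerivAt (fun v : ℝ => 2 * v / (v ^ 2 - 1) - L v)
        ((2 * (u ^ 2 - 1) - 2 * u * (2 * u ^ 1)) / (u ^ 2 - 1) ^ 2 - (-2 / (u ^ 2 - 1))) u := by
    intro u hu
    obtain ⟨h0, h1, h2⟩ := hne u hu
    have hc : HasDerivAt (fun v : ℝ => 2 * v) 2 u := by
      simpa using (hasDerivAt_id u).const_mul (2:ℝ)
    have hd : HasDerivAt (fun v : ℝ => v ^ 2 - 1) (2 * u ^ 1) u := by
      simpa using (hasDerivAt_pow 2 u).sub_const 1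
    exact (hc.div hd h1).sub (wp_hasDerivAt_L u hu)
  have hf2anti : StrictAntiOn (fun v : ℝ => 2 * v / (v ^ 2 - 1) - L v) (Set.Ioi 1) := by
    apply strictAntiOn_of_deriv_neg (convex_Ioi 1)
    · intro u hu
      exact (hf2deriv u hu).continuousAt.continuousWithinAt
    · intro u hu
      rw [interior_Ioi] at hu
      have hu' : 1 < u := hu
      rw [(hf2deriv u hu').deriv]
      obtain ⟨h0, h1, h2⟩ := hne u hu'
      have e1 : (2 * (u ^ 2 - 1) - 2 * u * (2 * u ^ 1)) / (u ^ 2 - 1) ^ 2 - (-2 / (u ^ 2 - 1))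
          = -4 / (u ^ 2 - 1) ^ 2 := by
        field_simp
        ring
      rw [e1]
      exact div_neg_of_neg_of_pos (by norm_num) (by positivity)
  have hf2tend : Tendsto (fun v : ℝ => 2 * v / (v ^ 2 - 1) - L v) atTop (nhds 0) := by
    have h2 : Tendsto (fun v : ℝ => 2 * v / (v ^ 2 - 1)) atTop (nhds 0) := by
      refine squeeze_zero' ?_ ?_
        (tendsto_const_nhds.div_atTop tendsto_id : Tendsto (fun v : ℝ => 4 / v) atTop (nhds 0))
      · filter_upwards [eventually_ge_atTop (2 : ℝ)] with v hv
        have : (0:ℝ) < v ^ 2 - 1 := by nlinarith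
        positivity
      · filter_upwards [eventually_ge_atTop (2 : ℝ)] with v hv
        have h2' : (0:ℝ) < v ^ 2 - 1 := by nlinarith
        rw [div_le_div_iff₀ h2' (by linarith)]
        nlinarith
    simpa using h2.sub wp_L_tendsto
  have hf2pos : ∀ u : ℝ, 1 < u → 0 < 2 * u / (u ^ 2 - 1) - L u :=
    wp_pos_of_strictAntiOn_tendsto hf2anti hf2tend
  -- F : 2/u + 2/(3(u³-u)) - L u is positive
  have hFderiv : ∀ u : ℝ, 1 < u →
      HasDerivAt (fun v : ℝ => 2 / v + 2 / (3 * (v ^ 3 - v)) - L v)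
        ((-2 / u ^ 2) + (0 * (3 * (u ^ 3 - u)) - 2 * (3 * (3 * u ^ 2 - 1))) / (3 * (u ^ 3 - u)) ^ 2
          - (-2 / (u ^ 2 - 1))) u := by
    intro u hu
    obtain ⟨h0, h1, h2⟩ := hne u hu
    have hinv : HasDerivAt (fun v : ℝ => 2 / v) (-2 / u ^ 2) u := by
      have := (hasDerivAt_inv (by linarith : u ≠ 0)).const_mul (2:ℝ)
      simpa [div_eq_mul_inv, neg_div] using this
    have hd : HasDerivAt (fun v : ℝ => 3 * (v ^ 3 - v)) (3 * (3 * u ^ 2 - 1)) u := by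
      have := ((hasDerivAt_pow 3 u).sub (hasDerivAt_id u)).const_mul (3:ℝ)
      exact this.congr_deriv (by norm_num)
    have hq : HasDerivAt (fun v : ℝ => 2 / (3 * (v ^ 3 - v)))
        ((0 * (3 * (u ^ 3 - u)) - 2 * (3 * (3 * u ^ 2 - 1))) / (3 * (u ^ 3 - u)) ^ 2) u := by
      refine (hasDerivAt_const u (2:ℝ)).div hd ?_
      have : u ^ 3 - u = u * (u ^ 2 - 1) := by ring
      rw [this]
      positivity
    exact (hinv.add hq).sub (wp_hasDerivAt_L u hu)
  have hFanti : StrictAntiOn (fun v : ℝ => 2 / v + 2 / (3 * (v ^ 3 - v)) - L v) (Set.Ioi 1) := by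
    apply strictAntiOn_of_deriv_neg (convex_Ioi 1)
    · intro u hu
      exact (hFderiv u hu).continuousAt.continuousWithinAt
    · intro u hu
      rw [interior_Ioi] at hu
      have hu' : 1 < u := hu
      rw [(hFderiv u hu').deriv]
      obtain ⟨h0, h1, h2⟩ := hne u hu'
      have h3 : u ^ 3 - u ≠ 0 := by
        have : u ^ 3 - u = u * (u ^ 2 - 1) := by ring
        rw [this]; positivity
      have e1 : (-2 / u ^ 2) + (0 * (3 * (u ^ 3 - u)) - 2 * (3 * (3 * u ^ 2 - 1))) /
          (3 * (u ^ 3 - u)) ^ 2 - (-2 / (u ^ 2 - 1))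
          = -4 / (3 * u ^ 2 * (u ^ 2 - 1) ^ 2) := by
        field_simp
        ring
      rw [e1]
      exact div_neg_of_neg_of_pos (by norm_num) (by positivity)
  have hFtend : Tendsto (fun v : ℝ => 2 / v + 2 / (3 * (v ^ 3 - v)) - L v) atTop (nhds 0) := by
    have h2 : Tendsto (fun v : ℝ => 2 / v) atTop (nhds 0) :=
      tendsto_const_nhds.div_atTop tendsto_id
    have hcub : Tendsto (fun v : ℝ => 3 * (v ^ 3 - v)) atTop atTop := by
      refine tendsto_atTop_mono' atTop ?_ tendsto_id
      filter_upwards [eventually_ge_atTop (2 : ℝ)] with v hv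
      show v ≤ 3 * (v ^ 3 - v)
      have hv0 : (0:ℝ) < v := by linarith
      have h4 : (4:ℝ) ≤ v ^ 2 := by nlinarith
      nlinarith [mul_le_mul_of_nonneg_left h4 hv0.le]
    have h3 : Tendsto (fun v : ℝ => 2 / (3 * (v ^ 3 - v))) atTop (nhds 0) :=
      tendsto_const_nhds.div_atTop hcub
    simpa using (h2.add h3).sub wp_L_tendsto
  have hFpos : ∀ u : ℝ, 1 < u → 0 < 2 / u + 2 / (3 * (u ^ 3 - u)) - L u :=
    wp_pos_of_strictAntiOn_tendsto hFanti hFtend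
  -- the key upper bound g(u) ≤ 2/(3(u²-1))
  have hub : ∀ u : ℝ, 1 < u → u * L u - 2 ≤ 2 / (3 * (u ^ 2 - 1)) := by
    intro u hu
    obtain ⟨h0, h1, h2⟩ := hne u hu
    have hF := hFpos u hu
    have hmul : u * L u < u * (2 / u + 2 / (3 * (u ^ 3 - u))) :=
      mul_lt_mul_of_pos_left (by linarith) (by linarith : (0:ℝ) < u)
    have he : u * (2 / u + 2 / (3 * (u ^ 3 - u))) = 2 + 2 / (3 * (u ^ 2 - 1)) := by
      have h3 : u ^ 3 - u ≠ 0 := by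
        have : u ^ 3 - u = u * (u ^ 2 - 1) := by ring
        rw [this]; positivity
      field_simp
    rw [he] at hmul
    linarith
  -- assemble
  refine ⟨?_, ?_, ?_, ?_⟩
  · intro u hu
    have h := hf1pos u hu
    have hmul : u * (2 / u) < u * L u :=
      mul_lt_mul_of_pos_left (by linarith) (by linarith : (0:ℝ) < u)
    have he : u * (2 / u) = 2 := by field_simp
    rw [he] at hmul
    linarith
  · apply strictAntiOn_of_deriv_neg (convex_Ioi 1)
    · intro u hu
      have hu' : 1 < u := hu
      have : HasDerivAt (fun v : ℝ => v * L v - 2)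
          (1 * L u + u * (-2 / (u ^ 2 - 1))) u :=
        ((hasDerivAt_id u).mul (wp_hasDerivAt_L u hu')).sub_const 2
      exact this.continuousAt.continuousWithinAt
    · intro u hu
      rw [interior_Ioi] at hu
      have hu' : 1 < u := hu
      have hder : HasDerivAt (fun v : ℝ => v * L v - 2)
          (1 * L u + u * (-2 / (u ^ 2 - 1))) u :=
        ((hasDerivAt_id u).mul (wp_hasDerivAt_L u hu')).sub_const 2
      rw [hder.deriv]
      have h := hf2pos u hu'
      have he : u * (-2 / (u ^ 2 - 1)) = -(2 * u / (u ^ 2 - 1)) := by ring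
      rw [one_mul, he]
      linarith
  · rw [Asymptotics.isBigO_iff]
    refine ⟨4 / 3, ?_⟩
    filter_upwards [eventually_ge_atTop (2 : ℝ)] with u hu
    have hu1 : 1 < u := by linarith
    obtain ⟨h0, h1, h2⟩ := hne u hu1
    have hg : 0 < u * L u - 2 := by
      have h := hf1pos u hu1
      have hmul : u * (2 / u) < u * L u :=
        mul_lt_mul_of_pos_left (by linarith) (by linarith : (0:ℝ) < u)
      have he : u * (2 / u) = 2 := by field_simp
      rw [he] at hmul; linarith
    have hb := hub u hu1
    rw [Real.norm_eq_abs, Real.norm_eq_abs, abs_of_pos hg, abs_of_pos (by positivity : (0:ℝ) < u⁻¹ ^ 2)]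
    have he2 : (4:ℝ) / 3 * u⁻¹ ^ 2 = 4 / (3 * u ^ 2) := by
      field_simp
    rw [he2]
    have : 2 / (3 * (u ^ 2 - 1)) ≤ 4 / (3 * u ^ 2) := by
      rw [div_le_div_iff₀ (by positivity) (by positivity)]
      nlinarith
    linarith
  · intro u hu
    obtain ⟨h0, h1, h2⟩ := hne u hu
    have hb := hub u hu
    have h4 : 2 / (3 * (u ^ 2 - 1)) ≤ 4 / (3 * (u ^ 2 - 1)) := by
      rw [div_le_div_iff₀ (by positivity) (by positivity)]
      nlinarith
    linarith
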